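/- Let (X,T) be a minimal topological dynamical system on a compact metric space, d ≥ 1, and U ⊆ X a non-empty open set. Then the closure of the τ_d-orbit of the diagonal copy U^{(d)} = {(x,…,x) : x ∈ U} has non-empty interior relative to N_d(X), where τ_d = T × T² × … × T^d and N_d(X) is the closure of the τ_d-orbit of the full diagonal Δ_d(X). -/

import Mathlib

/-- `N_d(X)` as the closure of the `τ_d`-orbit of the diagonal, where
`τ_d = T × T² × … × T^d`. -/
def NdTau {X : Type*} [MetricSpace X] (d : ℕ) (S : Equiv.Perm X) :
    Set (Fin d → X) :=
  closure {v | ∃ (x : X) (m : ℤ), v = fun i : Fin d => (S ^ (((i : ℕ) + 1) * m)) x}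

private lemma cont_zpow {X : Type*} [TopologicalSpace X] (T : X ≃ₜ X) (n : ℤ) :
    Continuous fun x => (T.toEquiv ^ n) x := by
  induction n using Int.induction_on with
  | zero => simpa using continuous_id'
  | succ n ih =>
    have : (fun x => (T.toEquiv ^ ((n : ℤ) + 1)) x)
        = (fun x => (T.toEquiv ^ (n : ℤ)) x) ∘ T := by
      funext x
      simp [zpow_add_one, Equiv.Perm.mul_apply]
    rw [this]
    exact ih.comp T.continuous
  | pred n ih =>
    have : (fun x => (T.toEquiv ^ (-(n : ℤ) - 1)) x)
        = (fun x => (T.toEquiv ^ (-(n : ℤ))) x) ∘ T.symm := by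
      funext x
      have : T.toEquiv ^ (-(n : ℤ) - 1) = T.toEquiv ^ (-(n : ℤ)) * (T.toEquiv)⁻¹ := by
        rw [zpow_sub_one]
      simp only [this, Equiv.Perm.mul_apply]
      rfl
    rw [this]
    exact ih.comp T.symm.continuous

private lemma zpow_comm_apply {X : Type*} (S : Equiv.Perm X) (a b : ℤ) (x : X) :
    (S ^ a) ((S ^ b) x) = (S ^ b) ((S ^ a) x) := by
  rw [← Equiv.Perm.mul_apply, ← Equiv.Perm.mul_apply, ← zpow_add, ← zpow_add, add_comm]

/-- for a minimal system and a non-empty open `U ⊆ X`, the closure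
of the `τ_d`-orbit of `U^{(d)} = Δ_d(U)` has non-empty interior relative to
`N_d(X)`. -/
theorem stmt_7 {X : Type*} [MetricSpace X] [CompactSpace X] (T : X ≃ₜ X)
    (hmin : ∀ x : X, Dense {y | ∃ n : ℤ, y = (T.toEquiv ^ n) x})
    (d : ℕ) (hd : 1 ≤ d) (U : Set X) (hU : IsOpen U) (hUne : U.Nonempty) :
    ∃ O : Set (Fin d → X), IsOpen O ∧ (O ∩ NdTau d T.toEquiv).Nonempty ∧
      O ∩ NdTau d T.toEquiv ⊆
        closure {v | ∃ x ∈ U, ∃ m : ℤ,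
          v = fun i : Fin d => (T.toEquiv ^ (((i : ℕ) + 1) * m)) x} := by
  classical
  set S := T.toEquiv with hS
  -- main closed set
  set A : Set (Fin d → X) := closure {v | ∃ x ∈ U, ∃ m : ℤ,
      v = fun i : Fin d => (S ^ (((i : ℕ) + 1) * m)) x} with hA
  -- the diagonal translation maps
  set Fn : ℤ → (Fin d → X) → (Fin d → X) := fun n v i => (S ^ n) (v i) with hFn
  have contFn : ∀ n : ℤ, Continuous (Fn n) := fun n =>
    continuous_pi fun i => (cont_zpow T n).comp (continuous_apply i)
  -- the base orbit set of the diagonal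
  set B : Set (Fin d → X) :=
      {v | ∃ (x : X) (m : ℤ), v = fun i : Fin d => (S ^ (((i : ℕ) + 1) * m)) x} with hB
  have hNd : NdTau d S = closure B := rfl
  -- Fn k maps B to B, hence NdTau to itself
  have hFnB : ∀ k : ℤ, Set.MapsTo (Fn k) B B := by
    rintro k v ⟨x, m, rfl⟩
    exact ⟨(S ^ k) x, m, funext fun i => zpow_comm_apply S k _ x⟩
  have hFnNd : ∀ k : ℤ, ∀ w ∈ NdTau d S, Fn k w ∈ NdTau d S := fun k w hw =>
    map_mem_closure (contFn k) hw (hFnB k)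
  -- finite subcover of X by preimages of U
  have hWopen : ∀ n : ℤ, IsOpen ((fun x => (S ^ n) x) ⁻¹' U) := fun n =>
    hU.preimage (cont_zpow T n)
  have hWcover : (Set.univ : Set X) ⊆ ⋃ n : ℤ, (fun x => (S ^ n) x) ⁻¹' U := by
    intro x _
    obtain ⟨y, hyorb, hyU⟩ := (hmin x).exists_mem_open hU hUne
    obtain ⟨n, rfl⟩ := hyorb
    exact Set.mem_iUnion.mpr ⟨n, hyU⟩
  obtain ⟨F, hF⟩ := isCompact_univ.elim_finite_subcover _ hWopen hWcover
  -- the closed sets g n cover NdTau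
  set g : ℤ → Set (Fin d → X) := fun n => Fn n ⁻¹' A with hg
  have hgclosed : ∀ n : ℤ, IsClosed (g n) := fun n => isClosed_closure.preimage (contFn n)
  have hcov : NdTau d S ⊆ ⋃ n ∈ F, g n := by
    rw [hNd]
    apply closure_minimal _ (Set.Finite.isClosed_biUnion F.finite_toSet fun n _ => hgclosed n)
    rintro v ⟨x, m, rfl⟩
    obtain ⟨n, hnF, hnx⟩ := Set.mem_iUnion₂.mp (hF (Set.mem_univ x))
    refine Set.mem_iUnion₂.mpr ⟨n, hnF, ?_⟩
    refine subset_closure ⟨(S ^ n) x, hnx, m, funext fun i => ?_⟩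
    exact zpow_comm_apply S n _ x
  -- NdTau is nonempty
  obtain ⟨x₀, hx₀⟩ := hUne
  have hx₀Nd : (fun _ : Fin d => x₀) ∈ NdTau d S := by
    refine subset_closure ⟨x₀, 0, funext fun i => ?_⟩
    simp
  -- Baire category on the subtype
  haveI : CompactSpace (NdTau d S) := by
    rw [hNd]
    exact isCompact_iff_compactSpace.mp isClosed_closure.isCompact
  haveI : Nonempty (NdTau d S) := ⟨⟨_, hx₀Nd⟩⟩
  set f : F → Set (NdTau d S) := fun n => Subtype.val ⁻¹' g n with hf
  have hfclosed : ∀ n : F, IsClosed (f n) := fun n =>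
    (hgclosed n).preimage continuous_subtype_val
  have hfU : ⋃ n : F, f n = Set.univ := by
    ext y
    simp only [Set.mem_iUnion, Set.mem_univ, iff_true]
    obtain ⟨n, hnF, hny⟩ := Set.mem_iUnion₂.mp (hcov y.2)
    exact ⟨⟨n, hnF⟩, hny⟩
  obtain ⟨n, y, hy⟩ := nonempty_interior_of_iUnion_of_closed hfclosed hfU
  -- extract an open set from the interior
  obtain ⟨t, htsub, htopen, hyt⟩ := mem_interior.mp hy
  obtain ⟨O, hOopen, rfl⟩ := isOpen_induced_iff.mp htopen
  -- O ∩ NdTau ⊆ g n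
  have hOg : O ∩ NdTau d S ⊆ g n := by
    rintro w ⟨hwO, hwNd⟩
    exact htsub (show (⟨w, hwNd⟩ : NdTau d S) ∈ _ from hwO)
  -- translate by Fn n
  have hcancel : ∀ w : Fin d → X, Fn n (Fn (-n) w) = w := by
    intro w
    funext i
    simp only [hFn, ← Equiv.Perm.mul_apply, ← zpow_add, add_neg_cancel, zpow_zero,
      Equiv.Perm.one_apply]
  refine ⟨Fn (-n) ⁻¹' O, hOopen.preimage (contFn (-n)), ?_, ?_⟩
  · refine ⟨Fn n y.1, ?_, hFnNd n y.1 y.2⟩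
    show Fn (-n) (Fn n y.1) ∈ O
    have : Fn (-n) (Fn n y.1) = y.1 := by
      funext i
      simp only [hFn, ← Equiv.Perm.mul_apply, ← zpow_add, neg_add_cancel, zpow_zero,
        Equiv.Perm.one_apply]
    rw [this]
    exact hyt
  · rintro w ⟨hwO, hwNd⟩
    have h1 : Fn (-n) w ∈ O ∩ NdTau d S := ⟨hwO, hFnNd (-n) w hwNd⟩
    have h2 := hOg h1
    rw [hg, Set.mem_preimage, hcancel w] at h2
    exact h2
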